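/- If μ is an ε-coarse correlated equilibrium of an n-player constant-sum polymatrix game G, then the marginal strategy profile s^μ is an nε-Nash equilibrium of G. -/

import Mathlib

open Finset

section GameTheory

variable {N : Type*} [Fintype N] [DecidableEq N]
variable {P : N → Type*} [∀ j, Fintype (P j)] [∀ j, DecidableEq (P j)] [∀ j, Nonempty (P j)]

/-- A probability distribution on a finite type. -/
def IsDist {A : Type*} [Fintype A] (μ : A → ℝ) : Prop :=
  (∀ a, 0 ≤ μ a) ∧ ∑ a, μ a = 1

/-- A profile of mixed strategies: one probability distribution per player. -/
def IsMixedProfile (s : ∀ j, P j → ℝ) : Prop := ∀ j, IsDist (s j)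

/-- The mixed strategy that plays the pure strategy `a` with probability 1. -/
def pureMix {A : Type*} [DecidableEq A] (a : A) : A → ℝ := fun b => if b = a then 1 else 0

/-- Expected utility of player `i` under the mixed-strategy profile `s`:
`u_i(s) = Σ_ρ (Π_j s_j(ρ_j)) u_i(ρ)`. -/
def mixedUtil (u : N → (∀ j, P j) → ℝ) (s : ∀ j, P j → ℝ) (i : N) : ℝ :=
  ∑ ρ : ∀ j, P j, (∏ j, s j (ρ j)) * u i ρ

/-- `s` is an ε-Nash equilibrium: no player gains more than ε by deviating to a
pure strategy. -/
def IsEpsNash (u : N → (∀ j, P j) → ℝ) (s : ∀ j, P j → ℝ) (ε : ℝ) : Prop :=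
  ∀ i, ∀ ρi' : P i,
    mixedUtil u (Function.update s i (pureMix ρi')) i - mixedUtil u s i ≤ ε

/-- `μ` is an ε-coarse correlated equilibrium. -/
def IsEpsCCE (u : N → (∀ j, P j) → ℝ) (μ : (∀ j, P j) → ℝ) (ε : ℝ) : Prop :=
  ∀ i, ∀ ρi' : P i,
    ∑ ρ : ∀ j, P j, μ ρ * (u i (Function.update ρ i ρi') - u i ρ) ≤ ε

/-- The marginal strategy of player `i` under the joint distribution `μ`. -/
def marginal (μ : (∀ j, P j) → ℝ) (i : N) (pi : P i) : ℝ :=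
  ∑ ρ : ∀ j, P j, if ρ i = pi then μ ρ else 0

/-- Neighbors of `i` in the polymatrix graph, i.e. the edges `E_i` containing `i`. -/
def neighbors (Adj : N → N → Bool) (i : N) : Finset N :=
  Finset.univ.filter (fun j => Adj i j)

/-- Global utility of player `i` in the polymatrix game given by graph `Adj`
and edgewise utilities `U`. -/
def polyUtil (Adj : N → N → Bool) (U : ∀ i j : N, P i → P j → ℝ) (i : N)
    (ρ : ∀ j, P j) : ℝ :=
  ∑ j ∈ neighbors Adj i, U i j (ρ i) (ρ j)

/-- Expected utility of `i` in the two-player subgame with `j`, under mixed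
strategies `si`, `sj`. -/
def subUtil (U : ∀ i j : N, P i → P j → ℝ) (i j : N) (si : P i → ℝ) (sj : P j → ℝ) : ℝ :=
  ∑ pi : P i, ∑ pj : P j, si pi * sj pj * U i j pi pj

/-- `Adj` is a valid edge indicator: symmetric and irreflexive. -/
def IsAdj (Adj : N → N → Bool) : Prop :=
  (∀ i j, Adj i j = Adj j i) ∧ (∀ i, Adj i i = false)

/-- `u` is the global utility function of the polymatrix game `(Adj, U)`. -/
def IsPolymatrix (u : N → (∀ j, P j) → ℝ) (Adj : N → N → Bool)
    (U : ∀ i j : N, P i → P j → ℝ) : Prop :=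
  IsAdj Adj ∧ ∀ i ρ, u i ρ = polyUtil Adj U i ρ

/-- The polymatrix game `(Adj, U)` is constant-sum on every edge. -/
def IsConstantSumPoly (Adj : N → N → Bool) (U : ∀ i j : N, P i → P j → ℝ) : Prop :=
  ∀ i j, Adj i j → ∃ c : ℝ, ∀ (pi : P i) (pj : P j), U i j pi pj + U j i pj pi = c

/-- `(si, sj)` is a γ-Nash equilibrium of the two-player subgame between `i` and `j`. -/
def SubgameEpsNash (U : ∀ i j : N, P i → P j → ℝ) (i j : N) (si : P i → ℝ)
    (sj : P j → ℝ) (γ : ℝ) : Prop :=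
  (∀ pi' : P i, subUtil U i j (pureMix pi') sj - subUtil U i j si sj ≤ γ) ∧
  (∀ pj' : P j, subUtil U j i (pureMix pj') si - subUtil U j i sj si ≤ γ)

end GameTheory

section AuxProof
set_option linter.unusedSectionVars false
variable {N : Type*} [Fintype N] [DecidableEq N]
variable {P : N → Type*} [∀ j, Fintype (P j)] [∀ j, DecidableEq (P j)]

lemma sum_prod_pi (g : ∀ j, P j → ℝ) :
    (∑ ρ : ∀ j, P j, ∏ j, g j (ρ j)) = ∏ j, ∑ p, g j p :=
  (Fintype.prod_sum g).symm

lemma marginal_sum (μ : (∀ j, P j) → ℝ) (j : N) (f : P j → ℝ) :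
    ∑ pj, marginal μ j pj * f pj = ∑ ρ : ∀ k, P k, μ ρ * f (ρ j) := by
  unfold marginal
  simp_rw [Finset.sum_mul, ite_mul, zero_mul]
  rw [Finset.sum_comm]
  refine Finset.sum_congr rfl fun ρ _ => ?_
  simp

lemma marginal_isDist {μ : (∀ j, P j) → ℝ} (hμ : IsDist μ) (j : N) :
    IsDist (marginal μ j) := by
  constructor
  · intro pj
    refine Finset.sum_nonneg fun ρ _ => ?_
    split
    · exact hμ.1 ρ
    · exact le_refl 0
  · unfold marginal
    rw [Finset.sum_comm]
    simp [hμ.2]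

lemma mixedUtil_decompose (u : N → (∀ j, P j) → ℝ) (s : ∀ j, P j → ℝ) (i : N) :
    mixedUtil u s i = ∑ pi, s i pi * mixedUtil u (Function.update s i (pureMix pi)) i := by
  unfold mixedUtil
  have key : ∀ (pi : P i) (ρ : ∀ j, P j),
      (∏ j, Function.update s i (pureMix pi) j (ρ j))
        = (if ρ i = pi then 1 else 0) * ∏ j ∈ Finset.univ.erase i, s j (ρ j) := by
    intro pi ρ
    rw [← Finset.mul_prod_erase Finset.univ _ (Finset.mem_univ i)]
    congr 1
    · simp [Function.update_self, pureMix]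
    · exact Finset.prod_congr rfl fun j hj => by
        rw [Function.update_of_ne (Finset.ne_of_mem_erase hj)]
  simp_rw [key, Finset.mul_sum]
  rw [Finset.sum_comm]
  refine Finset.sum_congr rfl fun ρ _ => ?_
  rw [← Finset.mul_prod_erase Finset.univ (fun j => s j (ρ j)) (Finset.mem_univ i)]
  simp [mul_ite, mul_one, mul_zero, Finset.sum_ite_eq, mul_assoc]


lemma dev_eq (u : N → (∀ j, P j) → ℝ) (Adj : N → N → Bool) (U : ∀ i j : N, P i → P j → ℝ)
    (hpoly : IsPolymatrix u Adj U) (μ : (∀ j, P j) → ℝ) (hμd : IsDist μ)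
    (i : N) (pi : P i) :
    mixedUtil u (Function.update (fun j => marginal μ j) i (pureMix pi)) i
      = ∑ ρ : ∀ j, P j, μ ρ * u i (Function.update ρ i pi) := by
  obtain ⟨⟨hsym, hirr⟩, hu⟩ := hpoly
  have hne : ∀ j ∈ neighbors Adj i, j ≠ i := by
    intro j hj h
    subst h
    have := (Finset.mem_filter.mp hj).2
    simp [hirr j] at this
  set s' : ∀ j, P j → ℝ := Function.update (fun j => marginal μ j) i (pureMix pi) with hs'
  have hRHS : (∑ ρ : ∀ j, P j, μ ρ * u i (Function.update ρ i pi))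
      = ∑ j ∈ neighbors Adj i, ∑ pj, marginal μ j pj * U i j pi pj := by
    have hrw : ∀ ρ : ∀ j, P j, u i (Function.update ρ i pi)
        = ∑ j ∈ neighbors Adj i, U i j pi (ρ j) := by
      intro ρ
      rw [hu]
      unfold polyUtil
      refine Finset.sum_congr rfl fun j hj => ?_
      rw [Function.update_self, Function.update_of_ne (hne j hj)]
    simp_rw [hrw, Finset.mul_sum]
    rw [Finset.sum_comm]
    exact Finset.sum_congr rfl fun j hj => (marginal_sum μ j _).symm
  rw [hRHS]
  unfold mixedUtil
  simp_rw [hu]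
  unfold polyUtil
  simp_rw [Finset.mul_sum]
  rw [Finset.sum_comm]
  refine Finset.sum_congr rfl fun j hj => ?_
  have hji : j ≠ i := hne j hj
  set g : ∀ k, P k → ℝ :=
    Function.update s' j (fun p => marginal μ j p * U i j pi p) with hg
  have hpoint : ∀ ρ : ∀ k, P k,
      (∏ k, s' k (ρ k)) * U i j (ρ i) (ρ j) = ∏ k, g k (ρ k) := by
    intro ρ
    by_cases h : ρ i = pi
    · rw [h]
      rw [← Finset.mul_prod_erase Finset.univ (fun k => s' k (ρ k)) (Finset.mem_univ j),
          ← Finset.mul_prod_erase Finset.univ (fun k => g k (ρ k)) (Finset.mem_univ j)]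
      have h1 : g j (ρ j) = marginal μ j (ρ j) * U i j pi (ρ j) := by
        rw [hg, Function.update_self]
      have h2 : s' j (ρ j) = marginal μ j (ρ j) := by
        rw [hs', Function.update_of_ne hji]
      have h3 : ∀ k ∈ Finset.univ.erase j, g k (ρ k) = s' k (ρ k) := by
        intro k hk
        rw [hg, Function.update_of_ne (Finset.ne_of_mem_erase hk)]
      rw [Finset.prod_congr rfl h3, h1, h2]
      ring
    · have hsi : s' i (ρ i) = 0 := by
        rw [hs', Function.update_self]
        simp [pureMix, h]
      have hgi : g i (ρ i) = 0 := by
        rw [hg, Function.update_of_ne hji.symm, hsi]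
      rw [Finset.prod_eq_zero (Finset.mem_univ i) hsi,
          Finset.prod_eq_zero (Finset.mem_univ i) hgi, zero_mul]
  simp_rw [hpoint]
  rw [sum_prod_pi,
    ← Finset.mul_prod_erase Finset.univ (fun k => ∑ p, g k p) (Finset.mem_univ j)]
  have hone : ∀ k ∈ Finset.univ.erase j, (∑ p, g k p) = 1 := by
    intro k hk
    rw [hg, Function.update_of_ne (Finset.ne_of_mem_erase hk), hs']
    by_cases hki : k = i
    · subst hki
      rw [Function.update_self]
      simp [pureMix]
    · rw [Function.update_of_ne hki]
      exact (marginal_isDist hμd k).2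
  rw [Finset.prod_eq_one hone, mul_one, hg]
  simp [Function.update_self]


lemma sum_util_const (u : N → (∀ j, P j) → ℝ) (Adj : N → N → Bool)
    (U : ∀ i j : N, P i → P j → ℝ)
    (hpoly : IsPolymatrix u Adj U) (hcs : IsConstantSumPoly Adj U) :
    ∃ C : ℝ, ∀ ρ : ∀ j, P j, ∑ i, u i ρ = C := by
  obtain ⟨⟨hsym, _⟩, hu⟩ := hpoly
  set c : N → N → ℝ := fun i j => if h : Adj i j = true then (hcs i j h).choose else 0 with hcdef
  have hc : ∀ i j, Adj i j = true → ∀ (pi : P i) (pj : P j),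
      U i j pi pj + U j i pj pi = c i j := by
    intro i j h pi pj
    rw [hcdef]
    dsimp only
    rw [dif_pos h]
    exact (hcs i j h).choose_spec pi pj
  refine ⟨(∑ i, ∑ j, if Adj i j then c i j else 0) / 2, fun ρ => ?_⟩
  have hS : ∑ i, u i ρ = ∑ i, ∑ j, if Adj i j then U i j (ρ i) (ρ j) else 0 := by
    refine Finset.sum_congr rfl fun i _ => ?_
    rw [hu]
    unfold polyUtil neighbors
    rw [Finset.sum_filter]
  rw [hS, eq_div_iff (by norm_num : (2:ℝ) ≠ 0)]
  have hswap : (∑ i, ∑ j, if Adj i j then U i j (ρ i) (ρ j) else 0)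
      = ∑ i, ∑ j, if Adj j i then U j i (ρ j) (ρ i) else 0 := Finset.sum_comm
  calc (∑ i, ∑ j, if Adj i j then U i j (ρ i) (ρ j) else 0) * 2
      = (∑ i, ∑ j, if Adj i j then U i j (ρ i) (ρ j) else 0)
        + (∑ i, ∑ j, if Adj j i then U j i (ρ j) (ρ i) else 0) := by
        rw [← hswap]; ring
    _ = ∑ i, ∑ j, if Adj i j then c i j else 0 := by
        rw [← Finset.sum_add_distrib]
        refine Finset.sum_congr rfl fun i _ => ?_
        rw [← Finset.sum_add_distrib]
        refine Finset.sum_congr rfl fun j _ => ?_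
        rw [hsym j i]
        by_cases h : Adj i j
        · simp only [h, if_true]
          exact hc i j h _ _
        · simp [h]

lemma sum_mixedUtil (u : N → (∀ j, P j) → ℝ) (C : ℝ)
    (hC : ∀ ρ : ∀ j, P j, ∑ i, u i ρ = C)
    (s : ∀ j, P j → ℝ) (hs : IsMixedProfile s) :
    ∑ i, mixedUtil u s i = C := by
  unfold mixedUtil
  rw [Finset.sum_comm]
  have h1 : ∀ ρ : ∀ j, P j, ∑ i, (∏ j, s j (ρ j)) * u i ρ = (∏ j, s j (ρ j)) * C := by
    intro ρ
    rw [← Finset.mul_sum, hC]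
  simp_rw [h1]
  rw [← Finset.sum_mul, sum_prod_pi, Finset.prod_eq_one fun j _ => (hs j).2, one_mul]

end AuxProof

/-- If `μ` is an ε-CCE of an n-player constant-sum polymatrix game, then the
marginal strategy profile `s^μ` is an nε-Nash equilibrium of that game. -/
theorem eps_cce_marginal_is_n_eps_nash
    {N : Type*} [Fintype N] [DecidableEq N]
    {P : N → Type*} [∀ j, Fintype (P j)] [∀ j, DecidableEq (P j)] [∀ j, Nonempty (P j)]
    (u : N → (∀ j, P j) → ℝ)
    (Adj : N → N → Bool) (U : ∀ i j : N, P i → P j → ℝ)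
    (hpoly : IsPolymatrix u Adj U) (hcs : IsConstantSumPoly Adj U)
    (ε : ℝ) (hε : 0 ≤ ε)
    (μ : (∀ j, P j) → ℝ) (hμd : IsDist μ) (hμ : IsEpsCCE u μ ε) :
    IsEpsNash u (fun j => marginal μ j) ((Fintype.card N : ℝ) * ε) := by
  obtain ⟨C, hC⟩ := sum_util_const u Adj U hpoly hcs
  set s : ∀ j, P j → ℝ := fun j => marginal μ j with hsdef
  have hsprof : IsMixedProfile s := fun j => marginal_isDist hμd j
  intro i ρi'
  have hdev : ∀ (k : N) (pk : P k),
      mixedUtil u (Function.update s k (pureMix pk)) k ≤ (∑ ρ : ∀ j, P j, μ ρ * u k ρ) + ε := by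
    intro k pk
    rw [hsdef, dev_eq u Adj U hpoly μ hμd k pk]
    have h := hμ k pk
    simp_rw [mul_sub] at h
    rw [Finset.sum_sub_distrib] at h
    linarith
  have hM_le : ∀ k : N, mixedUtil u s k ≤ (∑ ρ : ∀ j, P j, μ ρ * u k ρ) + ε := by
    intro k
    rw [mixedUtil_decompose u s k]
    calc ∑ pk, s k pk * mixedUtil u (Function.update s k (pureMix pk)) k
        ≤ ∑ pk, s k pk * ((∑ ρ : ∀ j, P j, μ ρ * u k ρ) + ε) :=
          Finset.sum_le_sum fun pk _ =>
            mul_le_mul_of_nonneg_left (hdev k pk) ((hsprof k).1 pk)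
      _ = (∑ ρ : ∀ j, P j, μ ρ * u k ρ) + ε := by
          rw [← Finset.sum_mul, (hsprof k).2, one_mul]
  have hsumM : ∑ k, mixedUtil u s k = C := sum_mixedUtil u C hC s hsprof
  have hsumE : ∑ k, (∑ ρ : ∀ j, P j, μ ρ * u k ρ) = C := by
    rw [Finset.sum_comm]
    simp_rw [← Finset.mul_sum, hC]
    rw [← Finset.sum_mul, hμd.2, one_mul]
  have hMi : (∑ ρ : ∀ j, P j, μ ρ * u i ρ) - ((Fintype.card N : ℝ) - 1) * ε
      ≤ mixedUtil u s i := by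
    have h1 : ∑ k ∈ Finset.univ.erase i, mixedUtil u s k
        ≤ ∑ k ∈ Finset.univ.erase i, ((∑ ρ : ∀ j, P j, μ ρ * u k ρ) + ε) :=
      Finset.sum_le_sum fun k _ => hM_le k
    have h2 : mixedUtil u s i + ∑ k ∈ Finset.univ.erase i, mixedUtil u s k = C := by
      rw [← hsumM, Finset.add_sum_erase Finset.univ _ (Finset.mem_univ i)]
    have h3 : (∑ ρ : ∀ j, P j, μ ρ * u i ρ)
        + ∑ k ∈ Finset.univ.erase i, (∑ ρ : ∀ j, P j, μ ρ * u k ρ) = C := by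
      rw [← hsumE]
      exact Finset.add_sum_erase Finset.univ
        (fun k => ∑ ρ : ∀ j, P j, μ ρ * u k ρ) (Finset.mem_univ i)
    have h4 : ∑ k ∈ Finset.univ.erase i, ((∑ ρ : ∀ j, P j, μ ρ * u k ρ) + ε)
        = (∑ k ∈ Finset.univ.erase i, (∑ ρ : ∀ j, P j, μ ρ * u k ρ))
          + ((Fintype.card N : ℝ) - 1) * ε := by
      rw [Finset.sum_add_distrib, Finset.sum_const,
        Finset.card_erase_of_mem (Finset.mem_univ i), Finset.card_univ]
      have hpos : 1 ≤ Fintype.card N := Fintype.card_pos_iff.mpr ⟨i⟩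
      rw [nsmul_eq_mul, Nat.cast_sub hpos, Nat.cast_one]
    linarith
  have hfin := hdev i ρi'
  have hring : (Fintype.card N : ℝ) * ε = ((Fintype.card N : ℝ) - 1) * ε + ε := by ring
  rw [hsdef] at hMi hfin ⊢
  linarith
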